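/- Let μ be a probability measure on a measurable space Ω, let T, E₁, E₀ be measurable subsets of Ω with μ(E₀) > 0, let α be a countable type whose singletons are measurable, let Y : Ω → α be measurable, and let ε ≥ 0 be real. Assume that for every y ∈ α with μ({Y = y} ∩ E₁) > 0 one has exp(−ε)·μ[T | E₀] ≤ μ[T | {Y = y} ∩ E₁] ≤ exp(ε)·μ[T | E₀]. Then for every subset S ⊆ α with μ({Y ∈ S} ∩ E₁) > 0 and μ({Y ∉ S} ∩ E₁) > 0, exp(−2ε)·μ[T | {Y ∉ S} ∩ E₁] ≤ μ[T | {Y ∈ S} ∩ E₁] ≤ exp(2ε)·μ[T | {Y ∉ S} ∩ E₁]. -/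
import Mathlib

open MeasureTheory

/-- Conditional probability `μ[A | B] = μ(A ∩ B) / μ(B)` as a real number. -/
noncomputable def condP {Ω : Type*} [MeasurableSpace Ω] (μ : Measure Ω) (A B : Set Ω) : ℝ :=
  (μ (A ∩ B)).toReal / (μ B).toReal

lemma condP_nonneg {Ω : Type*} [MeasurableSpace Ω] (μ : Measure Ω) (A B : Set Ω) :
    0 ≤ condP μ A B := by
  unfold condP; positivity

lemma aux_le {Ω ι : Type*} [MeasurableSpace Ω] [Countable ι] (μ : Measure Ω) [IsFiniteMeasure μ]
    (T : Set Ω) (hT : MeasurableSet T) (B : ι → Set Ω) (hm : ∀ i, MeasurableSet (B i))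
    (hd : Pairwise (Function.onFun Disjoint B)) (c : ℝ) (hc : 0 ≤ c)
    (h : ∀ i, 0 < (μ (B i)).toReal → condP μ T (B i) ≤ c) :
    condP μ T (⋃ i, B i) ≤ c := by
  have hfin : ∀ s : Set Ω, μ s ≠ ⊤ := fun s => measure_ne_top μ s
  have key : μ (T ∩ ⋃ i, B i) ≤ ENNReal.ofReal c * μ (⋃ i, B i) := by
    rw [Set.inter_iUnion, measure_iUnion (fun i j hij => (hd hij).mono
        Set.inter_subset_right Set.inter_subset_right) (fun i => hT.inter (hm i)),
      measure_iUnion hd hm, ← ENNReal.tsum_mul_left]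
    refine ENNReal.tsum_le_tsum (fun i => ?_)
    by_cases h0 : μ (B i) = 0
    · have : μ (T ∩ B i) = 0 := measure_mono_null Set.inter_subset_right h0
      simp [this]
    · have hpos : 0 < (μ (B i)).toReal := ENNReal.toReal_pos h0 (hfin _)
      have := h i hpos
      unfold condP at this
      rw [div_le_iff₀ hpos] at this
      calc μ (T ∩ B i) = ENNReal.ofReal (μ (T ∩ B i)).toReal := (ENNReal.ofReal_toReal (hfin _)).symm
        _ ≤ ENNReal.ofReal (c * (μ (B i)).toReal) := ENNReal.ofReal_le_ofReal this
        _ = ENNReal.ofReal c * μ (B i) := by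
            rw [ENNReal.ofReal_mul hc, ENNReal.ofReal_toReal (hfin _)]
  unfold condP
  by_cases h0 : μ (⋃ i, B i) = 0
  · have : μ (T ∩ ⋃ i, B i) = 0 := measure_mono_null Set.inter_subset_right h0
    simp [this, h0, hc]
  · have hpos : 0 < (μ (⋃ i, B i)).toReal := ENNReal.toReal_pos h0 (hfin _)
    rw [div_le_iff₀ hpos]
    have := ENNReal.toReal_mono (by finiteness) key
    rwa [ENNReal.toReal_mul, ENNReal.toReal_ofReal hc] at this

lemma aux_ge {Ω ι : Type*} [MeasurableSpace Ω] [Countable ι] (μ : Measure Ω) [IsFiniteMeasure μ]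
    (T : Set Ω) (hT : MeasurableSet T) (B : ι → Set Ω) (hm : ∀ i, MeasurableSet (B i))
    (hd : Pairwise (Function.onFun Disjoint B)) (c : ℝ) (hc : 0 ≤ c)
    (h : ∀ i, 0 < (μ (B i)).toReal → c ≤ condP μ T (B i)) :
    0 < (μ (⋃ i, B i)).toReal → c ≤ condP μ T (⋃ i, B i) := by
  intro hposU
  have hfin : ∀ s : Set Ω, μ s ≠ ⊤ := fun s => measure_ne_top μ s
  have key : ENNReal.ofReal c * μ (⋃ i, B i) ≤ μ (T ∩ ⋃ i, B i) := by
    rw [Set.inter_iUnion, measure_iUnion (fun i j hij => (hd hij).mono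
        Set.inter_subset_right Set.inter_subset_right) (fun i => hT.inter (hm i)),
      measure_iUnion hd hm, ← ENNReal.tsum_mul_left]
    refine ENNReal.tsum_le_tsum (fun i => ?_)
    by_cases h0 : μ (B i) = 0
    · simp [h0]
    · have hpos : 0 < (μ (B i)).toReal := ENNReal.toReal_pos h0 (hfin _)
      have := h i hpos
      unfold condP at this
      rw [le_div_iff₀ hpos] at this
      calc ENNReal.ofReal c * μ (B i) = ENNReal.ofReal (c * (μ (B i)).toReal) := by
            rw [ENNReal.ofReal_mul hc, ENNReal.ofReal_toReal (hfin _)]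
        _ ≤ ENNReal.ofReal (μ (T ∩ B i)).toReal := ENNReal.ofReal_le_ofReal this
        _ = μ (T ∩ B i) := ENNReal.ofReal_toReal (hfin _)
  unfold condP
  rw [le_div_iff₀ hposU]
  have := ENNReal.toReal_mono (by finiteness) key
  rwa [ENNReal.toReal_mul, ENNReal.toReal_ofReal hc] at this

theorem stmt_2 {Ω α : Type*} [MeasurableSpace Ω] [MeasurableSpace α] [Countable α]
    [MeasurableSingletonClass α]
    (μ : Measure Ω) [IsProbabilityMeasure μ]
    (T E1 E0 : Set Ω) (hT : MeasurableSet T) (hE1 : MeasurableSet E1) (hE0 : MeasurableSet E0)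
    (hE00 : 0 < (μ E0).toReal)
    (Y : Ω → α) (hY : Measurable Y) (ε : ℝ) (hε : 0 ≤ ε)
    (h : ∀ y : α, 0 < (μ ({ω | Y ω = y} ∩ E1)).toReal →
      Real.exp (-ε) * condP μ T E0 ≤ condP μ T ({ω | Y ω = y} ∩ E1) ∧
      condP μ T ({ω | Y ω = y} ∩ E1) ≤ Real.exp ε * condP μ T E0) :
    ∀ S : Set α, 0 < (μ ({ω | Y ω ∈ S} ∩ E1)).toReal →
      0 < (μ ({ω | Y ω ∉ S} ∩ E1)).toReal →
      Real.exp (-(2*ε)) * condP μ T ({ω | Y ω ∉ S} ∩ E1) ≤ condP μ T ({ω | Y ω ∈ S} ∩ E1) ∧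
      condP μ T ({ω | Y ω ∈ S} ∩ E1) ≤ Real.exp (2*ε) * condP μ T ({ω | Y ω ∉ S} ∩ E1) := by
  set p0 := condP μ T E0 with hp0
  have hp0nn : 0 ≤ p0 := condP_nonneg μ T E0
  -- general: for any set S' of α with stuff
  have main : ∀ S' : Set α, 0 < (μ ({ω | Y ω ∈ S'} ∩ E1)).toReal →
      Real.exp (-ε) * p0 ≤ condP μ T ({ω | Y ω ∈ S'} ∩ E1) ∧
      condP μ T ({ω | Y ω ∈ S'} ∩ E1) ≤ Real.exp ε * p0 := by
    intro S' hS'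
    have hUnion : {ω | Y ω ∈ S'} ∩ E1 = ⋃ y : S', ({ω | Y ω = (y : α)} ∩ E1) := by
      ext ω; simp [Set.mem_iUnion]
    have hm : ∀ y : S', MeasurableSet ({ω | Y ω = (y : α)} ∩ E1) :=
      fun y => (hY (measurableSet_singleton (y : α))).inter hE1
    have hd : Pairwise (Function.onFun Disjoint (fun y : S' => {ω | Y ω = (y : α)} ∩ E1)) := by
      intro i j hij
      refine Set.disjoint_left.2 (fun ω hi hj => hij ?_)
      exact Subtype.ext (hi.1.symm.trans hj.1)
    rw [hUnion] at hS' ⊢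
    constructor
    · exact aux_ge μ T hT _ hm hd _ (by positivity)
        (fun y hy => (h y hy).1) hS'
    · exact aux_le μ T hT _ hm hd _ (by positivity)
        (fun y hy => (h y hy).2)
  intro S hS hSc
  obtain ⟨hS1, hS2⟩ := main S hS
  obtain ⟨hC1, hC2⟩ := main Sᶜ (by simpa using hSc)
  have hC1' : Real.exp (-ε) * p0 ≤ condP μ T ({ω | Y ω ∉ S} ∩ E1) := by simpa using hC1
  have hC2' : condP μ T ({ω | Y ω ∉ S} ∩ E1) ≤ Real.exp ε * p0 := by simpa using hC2
  constructor
  · calc Real.exp (-(2*ε)) * condP μ T ({ω | Y ω ∉ S} ∩ E1)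
        ≤ Real.exp (-(2*ε)) * (Real.exp ε * p0) := by
          exact mul_le_mul_of_nonneg_left hC2' (Real.exp_pos _).le
      _ = Real.exp (-ε) * p0 := by rw [← mul_assoc, ← Real.exp_add]; ring_nf
      _ ≤ _ := hS1
  · calc condP μ T ({ω | Y ω ∈ S} ∩ E1) ≤ Real.exp ε * p0 := hS2
      _ = Real.exp (2*ε) * (Real.exp (-ε) * p0) := by rw [← mul_assoc, ← Real.exp_add]; ring_nf
      _ ≤ _ := mul_le_mul_of_nonneg_left hC1' (Real.exp_pos _).le
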